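/- Let N ≥ 1 and let δ be a positive divisor of N. For a positive divisor Q of N with gcd(Q, N/Q) = 1, let δ_Q be the largest divisor of δ all of whose prime factors divide Q, set δ' = (Q/δ_Q)·(δ/δ_Q), and let N_{δ'} be the largest divisor of N all of whose prime factors divide δ'. Then: (i) gcd(δ, N/δ) divides N_{δ'}/δ' for every such Q; (ii) for Q₀ = ∏_{p prime, p ∣ N, 0 < v_p(δ) ≤ v_p(N)/2} p^{v_p(N)}, where v_p denotes the p-adic valuation, one has gcd(Q₀, N/Q₀) = 1 and N_{δ'}/δ' = gcd(δ, N/δ). -/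
import Mathlib


/-- `cPart q n` is the largest divisor of `n` all of whose prime factors divide `q`. -/
def cPart (q n : ℕ) : ℕ :=
  ∏ p ∈ n.primeFactors.filter (fun p => p ∣ q), p ^ n.factorization p

/-- `δ' = (Q/δ_Q)·(δ/δ_Q)`, the denominator of the image of a cusp of denominator `δ`
under the Atkin–Lehner involution `W_Q`; here `δ_Q = cPart Q δ`. -/
def deltaPrime (Q δ : ℕ) : ℕ := (Q / cPart Q δ) * (δ / cPart Q δ)


lemma prodpow_fact (n : ℕ) (pred : ℕ → Prop) [DecidablePred pred] (p : ℕ) :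
    (∏ q ∈ n.primeFactors.filter (fun q => pred q), q ^ n.factorization q).factorization p =
    if pred p then n.factorization p else 0 := by
  rw [Nat.factorization_prod (fun q hq => by
    simp only [Finset.mem_filter, Nat.mem_primeFactors] at hq
    exact pow_ne_zero _ hq.1.1.pos.ne')]
  rw [Finsupp.finset_sum_apply]
  have h1 : ∀ q ∈ n.primeFactors.filter (fun q => pred q),
      (q ^ n.factorization q).factorization p = if q = p then n.factorization q else 0 := by
    intro q hq
    simp only [Finset.mem_filter, Nat.mem_primeFactors] at hq
    rw [hq.1.1.factorization_pow, Finsupp.single_apply]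
  rw [Finset.sum_congr rfl h1, Finset.sum_ite_eq']
  simp only [Finset.mem_filter, Nat.mem_primeFactors]
  by_cases hp : pred p
  · by_cases hm : p ∈ n.primeFactors
    · simp [hm, hp, Nat.mem_primeFactors.mp hm]
    · simp only [Nat.mem_primeFactors] at hm
      have : n.factorization p = 0 := by
        by_cases hpp : p.Prime
        · by_cases hn : n = 0
          · simp [hn]
          · by_cases hd : p ∣ n
            · exact absurd ⟨hpp, hd, hn⟩ hm
            · exact Nat.factorization_eq_zero_of_not_dvd hd
        · exact Nat.factorization_eq_zero_of_not_prime _ hpp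
      simp [this]
  · simp [hp]

lemma prodpow_pos (n : ℕ) (pred : ℕ → Prop) [DecidablePred pred] :
    0 < ∏ q ∈ n.primeFactors.filter (fun q => pred q), q ^ n.factorization q :=
  Finset.prod_pos (fun q hq => by
    simp only [Finset.mem_filter, Nat.mem_primeFactors] at hq
    exact pow_pos hq.1.1.pos _)


lemma cPart_fact (q n p : ℕ) :
    (cPart q n).factorization p = if p ∣ q then n.factorization p else 0 :=
  prodpow_fact n (fun p => p ∣ q) p

lemma cPart_pos (q n : ℕ) : 0 < cPart q n := prodpow_pos n _

lemma fact_nonprime_zero {n : ℕ} (p : ℕ) (h : ¬ p.Prime) : n.factorization p = 0 :=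
  Nat.factorization_eq_zero_of_not_prime _ h

lemma main_fact (N δ Q : ℕ) (hN : N ≠ 0) (hδ : δ ≠ 0) (hδd : δ ∣ N) (hQ : Q ≠ 0)
    (hQd : Q ∣ N) (hcop : Nat.gcd Q (N / Q) = 1) :
    deltaPrime Q δ ≠ 0 ∧ deltaPrime Q δ ∣ cPart (deltaPrime Q δ) N ∧
    ∀ p : ℕ, p.Prime →
      (cPart (deltaPrime Q δ) N / deltaPrime Q δ).factorization p =
        if p ∣ Q then
          (if δ.factorization p < N.factorization p then δ.factorization p else 0)
        else (if 0 < δ.factorization p then N.factorization p - δ.factorization p else 0) := by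
  have hδleN : ∀ p, δ.factorization p ≤ N.factorization p :=
    Finsupp.le_def.mp ((Nat.factorization_le_iff_dvd hδ hN).mpr hδd)
  have hQleN : ∀ p, Q.factorization p ≤ N.factorization p :=
    Finsupp.le_def.mp ((Nat.factorization_le_iff_dvd hQ hN).mpr hQd)
  -- Q full: for prime p ∣ Q, v_p Q = v_p N
  have hQfull : ∀ p : ℕ, p.Prime → p ∣ Q → Q.factorization p = N.factorization p := by
    intro p hp hpQ
    have hpnQ : ¬ p ∣ N / Q := fun h => by
      have h1 := Nat.le_of_dvd one_pos (hcop ▸ Nat.dvd_gcd hpQ h)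
      have h2 := hp.two_le
      omega
    have h0 : (N / Q).factorization p = 0 := Nat.factorization_eq_zero_of_not_dvd hpnQ
    rw [Nat.factorization_div hQd, Finsupp.tsub_apply] at h0
    have := hQleN p
    omega
  -- c = cPart Q δ
  set c := cPart Q δ with hc
  have hcpos : 0 < c := cPart_pos Q δ
  have hcfact : ∀ p, c.factorization p = if p ∣ Q then δ.factorization p else 0 :=
    fun p => cPart_fact Q δ p
  have hcδ : c ∣ δ := by
    rw [← Nat.factorization_le_iff_dvd hcpos.ne' hδ, Finsupp.le_def]
    intro p
    rw [hcfact p]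
    split <;> simp
  have hcQ : c ∣ Q := by
    rw [← Nat.factorization_le_iff_dvd hcpos.ne' hQ, Finsupp.le_def]
    intro p
    rw [hcfact p]
    by_cases hpp : p.Prime
    · split
      · next h => rw [hQfull p hpp h]; exact hδleN p
      · simp
    · rw [fact_nonprime_zero p hpp]; split <;> simp [fact_nonprime_zero p hpp]
  have hQc : 0 < Q / c := Nat.div_pos (Nat.le_of_dvd (Nat.pos_of_ne_zero hQ) hcQ) hcpos
  have hδc : 0 < δ / c := Nat.div_pos (Nat.le_of_dvd (Nat.pos_of_ne_zero hδ) hcδ) hcpos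
  have hδ'pos : 0 < deltaPrime Q δ := Nat.mul_pos hQc hδc
  -- factorization of δ'
  have hδ'fact : ∀ p : ℕ, p.Prime → (deltaPrime Q δ).factorization p =
      if p ∣ Q then N.factorization p - δ.factorization p else δ.factorization p := by
    intro p hp
    rw [show deltaPrime Q δ = (Q / c) * (δ / c) from rfl,
      Nat.factorization_mul hQc.ne' hδc.ne', Finsupp.add_apply,
      Nat.factorization_div hcQ, Nat.factorization_div hcδ,
      Finsupp.tsub_apply, Finsupp.tsub_apply, hcfact p]
    by_cases hpQ : p ∣ Q
    · rw [hQfull p hp hpQ]; simp [hpQ]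
    · have : Q.factorization p = 0 := Nat.factorization_eq_zero_of_not_dvd hpQ
      simp [hpQ, this]
  have hδ'leN : ∀ p, (deltaPrime Q δ).factorization p ≤ N.factorization p := by
    intro p
    by_cases hpp : p.Prime
    · rw [hδ'fact p hpp]
      split
      · omega
      · exact hδleN p
    · simp [fact_nonprime_zero p hpp]
  have hδ'dvd : deltaPrime Q δ ∣ cPart (deltaPrime Q δ) N := by
    rw [← Nat.factorization_le_iff_dvd hδ'pos.ne' (cPart_pos _ _).ne', Finsupp.le_def]
    intro p
    rw [cPart_fact]
    by_cases h0 : (deltaPrime Q δ).factorization p = 0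
    · simp [h0]
    · have hpp : p.Prime := by
        by_contra hc'
        exact h0 (fact_nonprime_zero p hc')
      have hpd : p ∣ deltaPrime Q δ :=
        (hpp.dvd_iff_one_le_factorization hδ'pos.ne').mpr (by omega)
      rw [if_pos hpd]
      exact hδ'leN p
  refine ⟨hδ'pos.ne', hδ'dvd, fun p hp => ?_⟩
  have hv := hδ'fact p hp
  have hpdvd : p ∣ deltaPrime Q δ ↔
      0 < (if p ∣ Q then N.factorization p - δ.factorization p else δ.factorization p) := by
    rw [hp.dvd_iff_one_le_factorization hδ'pos.ne', hv]
    exact Iff.rfl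
  rw [Nat.factorization_div hδ'dvd, Finsupp.tsub_apply, cPart_fact, hv]
  have hle := hδleN p
  by_cases hd : p ∣ deltaPrime Q δ
  · have h1 := hpdvd.mp hd
    simp only [hd, if_true] at *
    split_ifs at * <;> omega
  · have h1 : ¬ 0 < (if p ∣ Q then N.factorization p - δ.factorization p
        else δ.factorization p) := fun h => hd (hpdvd.mpr h)
    simp only [hd, if_false] at *
    split_ifs at * <;> omega

/-- Let `δ` be a positive divisor of `N ≥ 1`. For `Q ∥ N` set
`δ' = (Q/δ_Q)(δ/δ_Q)` and let `N_{δ'}` be the largest divisor of `N` whose prime factors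
divide `δ'`. Then (i) `gcd(δ, N/δ) ∣ N_{δ'}/δ'` for every such `Q`; (ii) for
`Q₀ = ∏_{p ∣ N, 0 < v_p(δ) ≤ v_p(N)/2} p^{v_p(N)}` one has `gcd(Q₀, N/Q₀) = 1` and
`N_{δ'}/δ' = gcd(δ, N/δ)`. -/
theorem stmt_14 (N δ : ℕ) (hN : 1 ≤ N) (hδpos : 0 < δ) (hδdvd : δ ∣ N)
    (Q₀ : ℕ)
    (hQ₀ : Q₀ = ∏ p ∈ N.primeFactors.filter
      (fun p => 0 < δ.factorization p ∧ 2 * δ.factorization p ≤ N.factorization p),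
      p ^ N.factorization p) :
    (∀ Q : ℕ, 0 < Q → Q ∣ N → Nat.gcd Q (N / Q) = 1 →
      Nat.gcd δ (N / δ) ∣ cPart (deltaPrime Q δ) N / deltaPrime Q δ) ∧
    Nat.gcd Q₀ (N / Q₀) = 1 ∧
    cPart (deltaPrime Q₀ δ) N / deltaPrime Q₀ δ = Nat.gcd δ (N / δ) := by
  have hN0 : N ≠ 0 := by omega
  have hδ0 : δ ≠ 0 := hδpos.ne'
  have hδleN : ∀ p, δ.factorization p ≤ N.factorization p :=
    Finsupp.le_def.mp ((Nat.factorization_le_iff_dvd hδ0 hN0).mpr hδdvd)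
  have hNδ : N / δ ≠ 0 := (Nat.div_pos (Nat.le_of_dvd (by omega) hδdvd) hδpos).ne'
  have hg0 : Nat.gcd δ (N / δ) ≠ 0 := Nat.gcd_ne_zero_left hδ0
  have hgcdfact : ∀ p, (Nat.gcd δ (N / δ)).factorization p =
      min (δ.factorization p) (N.factorization p - δ.factorization p) := by
    intro p
    rw [Nat.factorization_gcd hδ0 hNδ, Finsupp.inf_apply, Nat.factorization_div hδdvd,
      Finsupp.tsub_apply]
  have part1 : ∀ Q : ℕ, 0 < Q → Q ∣ N → Nat.gcd Q (N / Q) = 1 →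
      Nat.gcd δ (N / δ) ∣ cPart (deltaPrime Q δ) N / deltaPrime Q δ := by
    intro Q hQpos hQd hcop
    obtain ⟨h1, h2, h3⟩ := main_fact N δ Q hN0 hδ0 hδdvd hQpos.ne' hQd hcop
    have hRpos : cPart (deltaPrime Q δ) N / deltaPrime Q δ ≠ 0 :=
      (Nat.div_pos (Nat.le_of_dvd (cPart_pos _ _) h2) (Nat.pos_of_ne_zero h1)).ne'
    rw [← Nat.factorization_le_iff_dvd hg0 hRpos, Finsupp.le_def]
    intro p
    rw [hgcdfact p]
    by_cases hpp : p.Prime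
    · rw [h3 p hpp]
      have := hδleN p
      split_ifs <;> omega
    · simp [fact_nonprime_zero p hpp]
  have hQ₀fact : ∀ p, Q₀.factorization p = if (0 < δ.factorization p ∧
      2 * δ.factorization p ≤ N.factorization p) then N.factorization p else 0 := by
    intro p
    rw [hQ₀]
    exact prodpow_fact N _ p
  have hQ₀pos : 0 < Q₀ := hQ₀ ▸ prodpow_pos N _
  have hQ₀dvd : Q₀ ∣ N := by
    rw [← Nat.factorization_le_iff_dvd hQ₀pos.ne' hN0, Finsupp.le_def]
    intro p
    rw [hQ₀fact]
    split <;> simp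
  have hcop : Nat.gcd Q₀ (N / Q₀) = 1 := by
    by_contra h
    obtain ⟨p, hp, hpd⟩ := Nat.exists_prime_and_dvd h
    have hpQ₀ : p ∣ Q₀ := hpd.trans (Nat.gcd_dvd_left _ _)
    have hpN : p ∣ N / Q₀ := hpd.trans (Nat.gcd_dvd_right _ _)
    have hNQ₀ : N / Q₀ ≠ 0 := (Nat.div_pos (Nat.le_of_dvd (by omega) hQ₀dvd) hQ₀pos).ne'
    have h1 : 1 ≤ Q₀.factorization p := (hp.dvd_iff_one_le_factorization hQ₀pos.ne').mp hpQ₀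
    have h2 : 1 ≤ (N / Q₀).factorization p := (hp.dvd_iff_one_le_factorization hNQ₀).mp hpN
    rw [Nat.factorization_div hQ₀dvd, Finsupp.tsub_apply] at h2
    rw [hQ₀fact p] at h1 h2
    split_ifs at h1 h2 <;> omega
  refine ⟨part1, hcop, ?_⟩
  obtain ⟨h1, h2, h3⟩ := main_fact N δ Q₀ hN0 hδ0 hδdvd hQ₀pos.ne' hQ₀dvd hcop
  have hRpos : cPart (deltaPrime Q₀ δ) N / deltaPrime Q₀ δ ≠ 0 :=
    (Nat.div_pos (Nat.le_of_dvd (cPart_pos _ _) h2) (Nat.pos_of_ne_zero h1)).ne'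
  have hppQ₀ : ∀ p, p.Prime → (p ∣ Q₀ ↔ (0 < δ.factorization p ∧
      2 * δ.factorization p ≤ N.factorization p)) := by
    intro p hp
    rw [hp.dvd_iff_one_le_factorization hQ₀pos.ne', hQ₀fact p]
    constructor
    · intro h
      split at h
      · assumption
      · omega
    · intro h
      rw [if_pos h]
      have := hδleN p
      omega
  apply Nat.factorization_inj hRpos hg0
  ext p
  by_cases hpp : p.Prime
  · rw [h3 p hpp, hgcdfact p]
    have hle := hδleN p
    by_cases hpQ : p ∣ Q₀
    · have hcond := (hppQ₀ p hpp).mp hpQ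
      rw [if_pos hpQ]
      split_ifs <;> omega
    · have hcond : ¬ (0 < δ.factorization p ∧
          2 * δ.factorization p ≤ N.factorization p) := fun h => hpQ ((hppQ₀ p hpp).mpr h)
      rw [if_neg hpQ]
      split_ifs <;> omega
  · rw [fact_nonprime_zero p hpp, fact_nonprime_zero p hpp]
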